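/- Let L > 0 and β > 0. Let u, v : [0,L]² → ℝ be of class C², where u satisfies u(L,y) = 0 for all y ∈ [0,L] and u_y(x,L) = β u_x(x,L), u_y(x,0) = 0 for all x ∈ [0,L], and v satisfies v(0,y) = 0 for all y ∈ [0,L] and v_y(x,L) = −β v_x(x,L), v_y(x,0) = 0 for all x ∈ [0,L]. Then −∫_Ω v(x,y) · (∂ₓ⁻¹ u_yy)(x,y) dx dy = ∫_Ω u(x,y) · ((∂ₓ⁻¹)* v_yy)(x,y) dx dy. -/

import Mathlib

open MeasureTheory Real

noncomputable section

/-- Partial derivative in `x` of `u(x,y)`. -/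
def pdx (u : ℝ → ℝ → ℝ) (x y : ℝ) : ℝ := deriv (fun x' => u x' y) x

/-- Third partial derivative in `x` of `u(x,y)`. -/
def pdx3 (u : ℝ → ℝ → ℝ) (x y : ℝ) : ℝ := iteratedDeriv 3 (fun x' => u x' y) x

/-- Partial derivative in `y` of `u(x,y)`. -/
def pdy (u : ℝ → ℝ → ℝ) (x y : ℝ) : ℝ := deriv (fun y' => u x y') y

/-- Second partial derivative in `y` of `u(x,y)`. -/
def pdy2 (u : ℝ → ℝ → ℝ) (x y : ℝ) : ℝ := iteratedDeriv 2 (fun y' => u x y') y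

/-- The nonlocal operator `(∂ₓ⁻¹ w)(x,y) = -∫ₓ^L w(s,y) ds`. -/
def pxInv (L : ℝ) (w : ℝ → ℝ → ℝ) (x y : ℝ) : ℝ := -(∫ s in x..L, w s y)

/-- The adjoint nonlocal operator `((∂ₓ⁻¹)* w)(x,y) = ∫₀^x w(s,y) ds`. -/
def pxInvStar (w : ℝ → ℝ → ℝ) (x y : ℝ) : ℝ := ∫ s in (0:ℝ)..x, w s y

section aux
variable {u : ℝ → ℝ → ℝ}

lemma contDiff_slice_y {n : ℕ∞} (hu : ContDiff ℝ n (fun p : ℝ × ℝ => u p.1 p.2)) (x : ℝ) :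
    ContDiff ℝ n (fun y => u x y) :=
  hu.comp (contDiff_const.prodMk contDiff_id)

lemma contDiff_slice_x {n : ℕ∞} (hu : ContDiff ℝ n (fun p : ℝ × ℝ => u p.1 p.2)) (y : ℝ) :
    ContDiff ℝ n (fun x => u x y) :=
  hu.comp (contDiff_id.prodMk contDiff_const)

lemma hasDerivAt_pdy (hu : ContDiff ℝ 1 (fun p : ℝ × ℝ => u p.1 p.2)) (x y : ℝ) :
    HasDerivAt (fun y' => u x y') (pdy u x y) y :=
  ((contDiff_slice_y hu x).differentiable (by simp) y).hasDerivAt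

lemma hasDerivAt_pdx (hu : ContDiff ℝ 1 (fun p : ℝ × ℝ => u p.1 p.2)) (x y : ℝ) :
    HasDerivAt (fun x' => u x' y) (pdx u x y) x :=
  ((contDiff_slice_x hu y).differentiable (by simp) x).hasDerivAt

lemma pdy_eq_fderiv (hu : ContDiff ℝ 1 (fun p : ℝ × ℝ => u p.1 p.2)) (x y : ℝ) :
    pdy u x y = (fderiv ℝ (fun p : ℝ × ℝ => u p.1 p.2) (x, y)) (0, 1) := by
  have hφ : HasDerivAt (fun y' : ℝ => ((x, y') : ℝ × ℝ)) ((0 : ℝ), (1 : ℝ)) y :=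
    (hasDerivAt_const y x).prodMk (hasDerivAt_id y)
  have h := ((hu.differentiable (by simp) (x, y)).hasFDerivAt).comp_hasDerivAt y hφ
  exact h.deriv

lemma pdx_eq_fderiv (hu : ContDiff ℝ 1 (fun p : ℝ × ℝ => u p.1 p.2)) (x y : ℝ) :
    pdx u x y = (fderiv ℝ (fun p : ℝ × ℝ => u p.1 p.2) (x, y)) (1, 0) := by
  have hφ : HasDerivAt (fun x' : ℝ => ((x', y) : ℝ × ℝ)) ((1 : ℝ), (0 : ℝ)) x :=
    (hasDerivAt_id x).prodMk (hasDerivAt_const x y)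
  have h := ((hu.differentiable (by simp) (x, y)).hasFDerivAt).comp_hasDerivAt x hφ
  exact h.deriv

lemma contDiff_pdy {n : ℕ∞} (hu : ContDiff ℝ (n + 1) (fun p : ℝ × ℝ => u p.1 p.2)) :
    ContDiff ℝ n (fun p : ℝ × ℝ => pdy u p.1 p.2) := by
  have h : (fun p : ℝ × ℝ => pdy u p.1 p.2)
      = fun p : ℝ × ℝ => (fderiv ℝ (fun q : ℝ × ℝ => u q.1 q.2) p) (0, 1) := by
    funext p
    exact pdy_eq_fderiv (hu.of_le le_add_self) p.1 p.2
  rw [h]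
  exact (hu.fderiv_right le_rfl).clm_apply contDiff_const

lemma contDiff_pdx {n : ℕ∞} (hu : ContDiff ℝ (n + 1) (fun p : ℝ × ℝ => u p.1 p.2)) :
    ContDiff ℝ n (fun p : ℝ × ℝ => pdx u p.1 p.2) := by
  have h : (fun p : ℝ × ℝ => pdx u p.1 p.2)
      = fun p : ℝ × ℝ => (fderiv ℝ (fun q : ℝ × ℝ => u q.1 q.2) p) (1, 0) := by
    funext p
    exact pdx_eq_fderiv (hu.of_le le_add_self) p.1 p.2
  rw [h]
  exact (hu.fderiv_right le_rfl).clm_apply contDiff_const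

lemma pdy2_eq (u : ℝ → ℝ → ℝ) (x y : ℝ) : pdy2 u x y = pdy (fun a b => pdy u a b) x y := by
  simp only [pdy2, pdy, iteratedDeriv_succ, iteratedDeriv_zero]

lemma continuous_pdy2 (hu : ContDiff ℝ 2 (fun p : ℝ × ℝ => u p.1 p.2)) :
    Continuous (fun p : ℝ × ℝ => pdy2 u p.1 p.2) := by
  have h2 : ContDiff ℝ ((1 : ℕ∞) + 1) (fun p : ℝ × ℝ => u p.1 p.2) := by
    convert hu using 2; norm_num
  have h1 : ContDiff ℝ ((0 : ℕ∞) + 1) (fun p : ℝ × ℝ => pdy u p.1 p.2) := by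
    have := contDiff_pdy (n := 1) h2
    convert this using 2; norm_num
  have := contDiff_pdy (n := 0) h1
  simp only [pdy2_eq]
  exact this.continuous

lemma hasDerivAt_pdy2 (hu : ContDiff ℝ 2 (fun p : ℝ × ℝ => u p.1 p.2)) (x y : ℝ) :
    HasDerivAt (fun y' => pdy u x y') (pdy2 u x y) y := by
  have h2 : ContDiff ℝ ((1 : ℕ∞) + 1) (fun p : ℝ × ℝ => u p.1 p.2) := by
    convert hu using 2; norm_num
  have h1 : ContDiff ℝ 1 (fun p : ℝ × ℝ => pdy u p.1 p.2) := contDiff_pdy h2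
  rw [pdy2_eq]
  exact hasDerivAt_pdy h1 x y

lemma swap_rect {f : ℝ → ℝ → ℝ} (hf : Continuous fun p : ℝ × ℝ => f p.1 p.2)
    {a b c d : ℝ} (hab : a ≤ b) (hcd : c ≤ d) :
    ∫ x in a..b, ∫ y in c..d, f x y = ∫ y in c..d, ∫ x in a..b, f x y := by
  rw [intervalIntegral.integral_of_le hab]
  rw [intervalIntegral.integral_of_le hcd]
  simp_rw [intervalIntegral.integral_of_le hab, intervalIntegral.integral_of_le hcd]
  apply MeasureTheory.integral_integral_swap
  have h : IntegrableOn (fun p : ℝ × ℝ => f p.1 p.2) (Set.Ioc a b ×ˢ Set.Ioc c d) volume := by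
    apply (hf.continuousOn.integrableOn_compact (isCompact_Icc.prod isCompact_Icc)).mono_set
    exact Set.prod_mono Set.Ioc_subset_Icc_self Set.Ioc_subset_Icc_self
  rwa [IntegrableOn, Measure.volume_eq_prod, ← Measure.prod_restrict] at h

lemma continuous_primXY {w : ℝ → ℝ → ℝ} (hw : Continuous fun p : ℝ × ℝ => w p.1 p.2) :
    Continuous fun p : ℝ × ℝ => ∫ s in (0 : ℝ)..p.1, w s p.2 :=
  intervalIntegral.continuous_parametric_intervalIntegral_of_continuous (μ := volume)
    (f := fun (p : ℝ × ℝ) (s : ℝ) => w s p.2)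
    (hw.comp (continuous_snd.prodMk (continuous_snd.comp continuous_fst))) continuous_fst

lemma continuous_tailXY {w : ℝ → ℝ → ℝ} {L : ℝ} (hw : Continuous fun p : ℝ × ℝ => w p.1 p.2) :
    Continuous fun p : ℝ × ℝ => ∫ s in p.1..L, w s p.2 := by
  have h : (fun p : ℝ × ℝ => ∫ s in p.1..L, w s p.2)
      = fun p : ℝ × ℝ => (∫ s in (0 : ℝ)..L, w s p.2) - ∫ s in (0 : ℝ)..p.1, w s p.2 := by
    funext p
    rw [intervalIntegral.integral_interval_sub_left]
    · exact (hw.comp (continuous_id.prodMk continuous_const)).intervalIntegrable _ _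
    · exact (hw.comp (continuous_id.prodMk continuous_const)).intervalIntegrable _ _
  rw [h]
  exact ((continuous_primXY (w := w) hw).comp
    (continuous_const.prodMk continuous_snd)).sub (continuous_primXY hw)

end aux

attribute [irreducible] pdx pdy pdy2 pxInv pxInvStar

set_option maxHeartbeats 1000000 in
/-- Duality identity for the nonlocal term of the KP-II operator under the closed-loop
and adjoint boundary conditions:
`-∫_Ω v · (∂ₓ⁻¹ u_yy) = ∫_Ω u · ((∂ₓ⁻¹)* v_yy)`. -/
theorem kp_nonlocal_duality (L β : ℝ) (hL : 0 < L) (hβ : 0 < β)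
    (u v : ℝ → ℝ → ℝ)
    (hu : ContDiff ℝ 2 (fun p : ℝ × ℝ => u p.1 p.2))
    (hv : ContDiff ℝ 2 (fun p : ℝ × ℝ => v p.1 p.2))
    (hubx : ∀ y ∈ Set.Icc (0:ℝ) L, u L y = 0)
    (huby : ∀ x ∈ Set.Icc (0:ℝ) L, pdy u x L = β * pdx u x L ∧ pdy u x 0 = 0)
    (hvbx : ∀ y ∈ Set.Icc (0:ℝ) L, v 0 y = 0)
    (hvby : ∀ x ∈ Set.Icc (0:ℝ) L, pdy v x L = -β * pdx v x L ∧ pdy v x 0 = 0) :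
    -(∫ x in (0:ℝ)..L, ∫ y in (0:ℝ)..L, v x y * pxInv L (pdy2 u) x y)
      = ∫ x in (0:ℝ)..L, ∫ y in (0:ℝ)..L, u x y * pxInvStar (pdy2 v) x y := by
  have h0L : (0:ℝ) ≤ L := hL.le
  have hu1 : ContDiff ℝ 1 (fun p : ℝ × ℝ => u p.1 p.2) := hu.of_le (by norm_num)
  have hv1 : ContDiff ℝ 1 (fun p : ℝ × ℝ => v p.1 p.2) := hv.of_le (by norm_num)
  have hu2' : ContDiff ℝ ((1:ℕ∞) + 1) (fun p : ℝ × ℝ => u p.1 p.2) := by convert hu using 2; norm_num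
  have hv2' : ContDiff ℝ ((1:ℕ∞) + 1) (fun p : ℝ × ℝ => v p.1 p.2) := by convert hv using 2; norm_num
  have hUc : Continuous fun p : ℝ × ℝ => u p.1 p.2 := hu.continuous
  have hVc : Continuous fun p : ℝ × ℝ => v p.1 p.2 := hv.continuous
  have hUyy : Continuous fun p : ℝ × ℝ => pdy2 u p.1 p.2 := continuous_pdy2 hu
  have hVyy : Continuous fun p : ℝ × ℝ => pdy2 v p.1 p.2 := continuous_pdy2 hv
  have hUx : Continuous fun p : ℝ × ℝ => pdx u p.1 p.2 := (contDiff_pdx hu2').continuous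
  have hVx : Continuous fun p : ℝ × ℝ => pdx v p.1 p.2 := (contDiff_pdx hv2').continuous
  have sx : ∀ {g : ℝ → ℝ → ℝ}, (Continuous fun p : ℝ × ℝ => g p.1 p.2) →
      ∀ y, Continuous fun x => g x y :=
    fun hg y => hg.comp (continuous_id.prodMk continuous_const)
  have sy : ∀ {g : ℝ → ℝ → ℝ}, (Continuous fun p : ℝ × ℝ => g p.1 p.2) →
      ∀ x, Continuous fun y => g x y :=
    fun hg x => hg.comp (continuous_const.prodMk continuous_id)
  have hB : Continuous fun p : ℝ × ℝ => ∫ s in p.1..L, u s p.2 := continuous_tailXY hUc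
  have hA2 : Continuous fun p : ℝ × ℝ => pxInvStar (pdy2 v) p.1 p.2 := by
    simp only [pxInvStar]; exact continuous_primXY hVyy
  -- key pointwise double integration by parts in y
  have key : ∀ x ∈ Set.Icc (0:ℝ) L, ∀ s ∈ Set.Icc (0:ℝ) L,
      (∫ y in (0:ℝ)..L, v x y * pdy2 u s y)
        = (β * v x L) * pdx u s L + (β * pdx v x L) * u s L
          + ∫ y in (0:ℝ)..L, pdy2 v x y * u s y := by
    intro x hx s hs
    have ibp1 := intervalIntegral.integral_mul_deriv_eq_deriv_mul
      (u := fun y => v x y) (v := fun y => pdy u s y)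
      (u' := fun y => pdy v x y) (v' := fun y => pdy2 u s y)
      (fun t _ => hasDerivAt_pdy hv1 x t) (fun t _ => hasDerivAt_pdy2 hu s t)
      ((sy (contDiff_pdy hv2').continuous x).intervalIntegrable 0 L)
      ((sy hUyy s).intervalIntegrable 0 L)
    have ibp2 := intervalIntegral.integral_mul_deriv_eq_deriv_mul
      (u := fun y => pdy v x y) (v := fun y => u s y)
      (u' := fun y => pdy2 v x y) (v' := fun y => pdy u s y)
      (fun t _ => hasDerivAt_pdy2 hv x t) (fun t _ => hasDerivAt_pdy hu1 s t)
      ((sy hVyy x).intervalIntegrable 0 L)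
      ((sy (contDiff_pdy hu2').continuous s).intervalIntegrable 0 L)
    beta_reduce at ibp1 ibp2
    rw [ibp1, ibp2, (huby s hs).1, (huby s hs).2, (hvby x hx).1, (hvby x hx).2]
    ring
  -- claim A : per x reduction of the inner integral
  have claimA : ∀ x ∈ Set.Icc (0:ℝ) L,
      (∫ y in (0:ℝ)..L, v x y * (∫ s in x..L, pdy2 u s y))
        = ((β * pdx v x L) * (∫ s in x..L, u s L) - β * (v x L * u x L))
          + ∫ y in (0:ℝ)..L, pdy2 v x y * (∫ s in x..L, u s y) := by
    intro x hx
    have hxL : x ≤ L := hx.2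
    have i1 : IntervalIntegrable (fun s => (β * v x L) * pdx u s L) volume x L :=
      (continuous_const.mul (sx hUx L)).intervalIntegrable x L
    have i2 : IntervalIntegrable (fun s => (β * pdx v x L) * u s L) volume x L :=
      (continuous_const.mul (sx hUc L)).intervalIntegrable x L
    have i3 : IntervalIntegrable (fun s => ∫ y in (0:ℝ)..L, pdy2 v x y * u s y) volume x L := by
      apply Continuous.intervalIntegrable
      exact intervalIntegral.continuous_parametric_intervalIntegral_of_continuous'
        (f := fun s y => pdy2 v x y * u s y)
        (((sy hVyy x).comp continuous_snd).mul hUc) 0 L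
    have e3 : (∫ s in x..L, pdx u s L) = u L L - u x L :=
      intervalIntegral.integral_eq_sub_of_hasDerivAt
        (fun t _ => hasDerivAt_pdx hu1 t L) ((sx hUx L).intervalIntegrable x L)
    calc (∫ y in (0:ℝ)..L, v x y * (∫ s in x..L, pdy2 u s y))
        = ∫ y in (0:ℝ)..L, ∫ s in x..L, v x y * pdy2 u s y := by
          simp_rw [intervalIntegral.integral_const_mul]
      _ = ∫ s in x..L, ∫ y in (0:ℝ)..L, v x y * pdy2 u s y :=
          swap_rect (f := fun y s => v x y * pdy2 u s y)
            (((sy hVc x).comp continuous_fst).mul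
              (hUyy.comp (continuous_snd.prodMk continuous_fst))) h0L hxL
      _ = ∫ s in x..L, ((β * v x L) * pdx u s L + (β * pdx v x L) * u s L
            + ∫ y in (0:ℝ)..L, pdy2 v x y * u s y) := by
          apply intervalIntegral.integral_congr
          intro s hsm
          rw [Set.uIcc_of_le hxL] at hsm
          exact key x hx s ⟨hx.1.trans hsm.1, hsm.2⟩
      _ = (∫ s in x..L, ((β * v x L) * pdx u s L + (β * pdx v x L) * u s L))
            + ∫ s in x..L, ∫ y in (0:ℝ)..L, pdy2 v x y * u s y :=
          intervalIntegral.integral_add (i1.add i2) i3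
      _ = ((∫ s in x..L, (β * v x L) * pdx u s L) + ∫ s in x..L, (β * pdx v x L) * u s L)
            + ∫ s in x..L, ∫ y in (0:ℝ)..L, pdy2 v x y * u s y := by
          exact congrArg (fun z => z + _) (intervalIntegral.integral_add i1 i2)
      _ = ((β * v x L) * (∫ s in x..L, pdx u s L) + (β * pdx v x L) * (∫ s in x..L, u s L))
            + ∫ s in x..L, ∫ y in (0:ℝ)..L, pdy2 v x y * u s y := by
          simp_rw [intervalIntegral.integral_const_mul]
      _ = ((β * v x L) * (∫ s in x..L, pdx u s L) + (β * pdx v x L) * (∫ s in x..L, u s L))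
            + ∫ y in (0:ℝ)..L, ∫ s in x..L, pdy2 v x y * u s y :=
          congrArg (fun z => _ + z)
            (swap_rect (f := fun s y => pdy2 v x y * u s y)
              (((sy hVyy x).comp continuous_snd).mul hUc) hxL h0L)
      _ = ((β * pdx v x L) * (∫ s in x..L, u s L) - β * (v x L * u x L))
            + ∫ y in (0:ℝ)..L, pdy2 v x y * (∫ s in x..L, u s y) := by
          simp_rw [intervalIntegral.integral_const_mul]
          rw [e3, hubx L ⟨h0L, le_rfl⟩]
          ring
  have j1 : IntervalIntegrable (fun x =>
      (β * pdx v x L) * (∫ s in x..L, u s L) - β * (v x L * u x L)) volume 0 L := by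
    apply Continuous.intervalIntegrable
    exact ((continuous_const.mul (sx hVx L)).mul (sx (g := fun x y => ∫ s in x..L, u s y) hB L)).sub
      (continuous_const.mul ((sx hVc L).mul (sx hUc L)))
  have j2 : IntervalIntegrable (fun x =>
      ∫ y in (0:ℝ)..L, pdy2 v x y * (∫ s in x..L, u s y)) volume 0 L := by
    apply Continuous.intervalIntegrable
    exact intervalIntegral.continuous_parametric_intervalIntegral_of_continuous'
      (f := fun x y => pdy2 v x y * (∫ s in x..L, u s y)) (hVyy.mul hB) 0 L
  -- the boundary term vanishes
  have zero1 : (∫ x in (0:ℝ)..L,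
      ((β * pdx v x L) * (∫ s in x..L, u s L) - β * (v x L * u x L))) = 0 := by
    have hBL : ∀ t : ℝ, HasDerivAt (fun r => ∫ s in r..L, u s L) (-(u t L)) t := fun t =>
      intervalIntegral.integral_hasDerivAt_left ((sx hUc L).intervalIntegrable t L)
        ((sx hUc L).stronglyMeasurableAtFilter volume (nhds t)) ((sx hUc L).continuousAt)
    have hg : ∀ t ∈ Set.uIcc (0:ℝ) L, HasDerivAt (fun r => β * (v r L * (∫ s in r..L, u s L)))
        ((β * pdx v t L) * (∫ s in t..L, u s L) - β * (v t L * u t L)) t := by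
      intro t _
      have h := ((hasDerivAt_pdx hv1 t L).mul (hBL t)).const_mul β
      refine h.congr_deriv ?_
      ring
    calc (∫ x in (0:ℝ)..L, ((β * pdx v x L) * (∫ s in x..L, u s L) - β * (v x L * u x L)))
        = β * (v L L * (∫ s in L..L, u s L)) - β * (v 0 L * (∫ s in (0:ℝ)..L, u s L)) :=
          intervalIntegral.integral_eq_sub_of_hasDerivAt hg j1
      _ = 0 := by
          rw [intervalIntegral.integral_same, hvbx L ⟨h0L, le_rfl⟩]
          ring
  -- per-y integration by parts in x for the remaining term
  have perY : ∀ y ∈ Set.uIcc (0:ℝ) L,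
      (∫ x in (0:ℝ)..L, pdy2 v x y * (∫ s in x..L, u s y))
        = ∫ x in (0:ℝ)..L, u x y * pxInvStar (pdy2 v) x y := by
    intro y _
    have hΦ : ∀ t : ℝ, HasDerivAt (fun r => ∫ s in (0:ℝ)..r, pdy2 v s y) (pdy2 v t y) t :=
      fun t => intervalIntegral.integral_hasDerivAt_right
        ((sx hVyy y).intervalIntegrable 0 t)
        ((sx hVyy y).stronglyMeasurableAtFilter volume (nhds t)) ((sx hVyy y).continuousAt)
    have hBy : ∀ t : ℝ, HasDerivAt (fun r => ∫ s in r..L, u s y) (-(u t y)) t := fun t =>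
      intervalIntegral.integral_hasDerivAt_left ((sx hUc y).intervalIntegrable t L)
        ((sx hUc y).stronglyMeasurableAtFilter volume (nhds t)) ((sx hUc y).continuousAt)
    have ibp := intervalIntegral.integral_mul_deriv_eq_deriv_mul
      (u := fun t => ∫ s in (0:ℝ)..t, pdy2 v s y) (v := fun t => ∫ s in t..L, u s y)
      (u' := fun t => pdy2 v t y) (v' := fun t => -(u t y))
      (fun t _ => hΦ t) (fun t _ => hBy t)
      ((sx hVyy y).intervalIntegrable 0 L)
      ((sx hUc y).neg.intervalIntegrable 0 L)
    have h1 : (∫ t in (0:ℝ)..L, (∫ s in (0:ℝ)..t, pdy2 v s y) * (-(u t y)))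
        = -∫ t in (0:ℝ)..L, u t y * pxInvStar (pdy2 v) t y := by
      rw [← intervalIntegral.integral_neg]
      apply intervalIntegral.integral_congr
      intro t _
      simp only [pxInvStar]
      ring
    simp only [intervalIntegral.integral_same, mul_zero, zero_mul, sub_zero, zero_sub] at ibp
    linarith [ibp, h1]
  -- assemble everything
  calc -(∫ x in (0:ℝ)..L, ∫ y in (0:ℝ)..L, v x y * pxInv L (pdy2 u) x y)
      = ∫ x in (0:ℝ)..L, ∫ y in (0:ℝ)..L, v x y * (∫ s in x..L, pdy2 u s y) := by
        simp only [pxInv, mul_neg, intervalIntegral.integral_neg, neg_neg]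
    _ = ∫ x in (0:ℝ)..L, (((β * pdx v x L) * (∫ s in x..L, u s L) - β * (v x L * u x L))
          + ∫ y in (0:ℝ)..L, pdy2 v x y * (∫ s in x..L, u s y)) :=
        intervalIntegral.integral_congr
          (fun x hx => claimA x (by rwa [Set.uIcc_of_le h0L] at hx))
    _ = (∫ x in (0:ℝ)..L, ((β * pdx v x L) * (∫ s in x..L, u s L) - β * (v x L * u x L)))
          + ∫ x in (0:ℝ)..L, ∫ y in (0:ℝ)..L, pdy2 v x y * (∫ s in x..L, u s y) :=
        intervalIntegral.integral_add j1 j2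
    _ = ∫ x in (0:ℝ)..L, ∫ y in (0:ℝ)..L, pdy2 v x y * (∫ s in x..L, u s y) := by
        rw [zero1, zero_add]
    _ = ∫ y in (0:ℝ)..L, ∫ x in (0:ℝ)..L, pdy2 v x y * (∫ s in x..L, u s y) :=
        swap_rect (f := fun x y => pdy2 v x y * (∫ s in x..L, u s y)) (hVyy.mul hB) h0L h0L
    _ = ∫ y in (0:ℝ)..L, ∫ x in (0:ℝ)..L, u x y * pxInvStar (pdy2 v) x y :=
        intervalIntegral.integral_congr perY
    _ = ∫ x in (0:ℝ)..L, ∫ y in (0:ℝ)..L, u x y * pxInvStar (pdy2 v) x y :=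
        (swap_rect (f := fun x y => u x y * pxInvStar (pdy2 v) x y) (hUc.mul hA2) h0L h0L).symm

end
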